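/- For d ≥ 2 and all n ≥ 1, (pd − 1)·∑_{i=1}^{n} w_i(q,d) < d·w_{n+1}(q,d). -/

import Mathlib

/-- Weight sequence: `W p d i` = w_i(q,d) where p = q-1; w_i = 0 for i ≤ 0 (encoded by
ℕ truncated subtraction together with `W p d 0 = 0`), and w_i = 1 + p·∑_{j=1}^d w_{i-j}
for i ≥ 1. -/
def W (p d : ℕ) : ℕ → ℕ
  | 0 => 0
  | (i+1) => 1 + p * ∑ j ∈ Finset.range d, W p d (i - j)
decreasing_by exact Nat.lt_succ_of_le (Nat.sub_le i j)

lemma W_succ (p d i : ℕ) : W p d (i+1) = 1 + p * ∑ j ∈ Finset.range d, W p d (i - j) := by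
  rw [W]

lemma W_step (p d : ℕ) : ∀ i, W p d i ≤ W p d (i+1) := by
  intro i
  induction i using Nat.strong_induction_on with
  | _ i ih =>
    match i with
    | 0 => simp [W]
    | m+1 =>
      rw [W_succ, W_succ]
      refine Nat.add_le_add_left (Nat.mul_le_mul_left _ (Finset.sum_le_sum fun j _ => ?_)) _
      rcases le_or_gt j m with h | h
      · have hmj : m + 1 - j = (m - j) + 1 := by omega
        rw [hmj]
        exact ih (m - j) (by omega)
      · have h1 : m - j = 0 := by omega
        rw [h1]
        simp [W]

lemma W_mono (p d : ℕ) : Monotone (W p d) := monotone_nat_of_le_succ (W_step p d)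


-- tail-sum decomposition
lemma sum_shift (p d n : ℕ) : ∀ k, (∑ j ∈ Finset.range k, W p d (n - j)) +
    ∑ i ∈ Finset.range (n + 1 - k), W p d i = ∑ i ∈ Finset.range (n + 1), W p d i := by
  intro k
  induction k with
  | zero => simp
  | succ m ih =>
    rw [Finset.sum_range_succ]
    rcases le_or_gt m n with h | h
    · have h1 : n + 1 - m = (n - m) + 1 := by omega
      have h2 : n + 1 - (m + 1) = n - m := by omega
      rw [← ih, h1, h2, Finset.sum_range_succ]
      ring
    · have h1 : n - m = 0 := by omega
      have h2 : n + 1 - (m + 1) = n + 1 - m := by omega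
      rw [← ih, h1, h2]
      simp [W]

-- range sum vs Icc sum
lemma range_Icc (p d m : ℕ) : ∑ i ∈ Finset.range (m + 1), W p d i = ∑ i ∈ Finset.Icc 1 m, W p d i := by
  rw [Finset.sum_range_succ', ← Finset.Ico_add_one_right_eq_Icc, Finset.sum_Ico_eq_sum_range]
  simp [W, add_comm]

-- step bound
lemma W_jump (p d i : ℕ) (hd : 1 ≤ d) : 1 + p * d * W p d i ≤ W p d (i + d) := by
  have h : i + d = (i + d - 1) + 1 := by omega
  rw [h, W_succ]
  have : d * W p d i ≤ ∑ j ∈ Finset.range d, W p d (i + d - 1 - j) := by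
    calc d * W p d i = ∑ _j ∈ Finset.range d, W p d i := by simp [mul_comm]
    _ ≤ _ := Finset.sum_le_sum fun j hj => W_mono p d (by simp at hj; omega)
  calc 1 + p * d * W p d i = 1 + p * (d * W p d i) := by ring
  _ ≤ _ := by exact Nat.add_le_add_left (Nat.mul_le_mul_left _ this) _


lemma sum_jump (p d n : ℕ) (hd : 1 ≤ d) (hdn : d ≤ n) :
    (n - d) + p * d * ∑ i ∈ Finset.Icc 1 (n - d), W p d i ≤ ∑ i ∈ Finset.Icc 1 n, W p d i := by
  set m := n - d with hm
  have h1 : (n - d) + p * d * ∑ i ∈ Finset.Icc 1 m, W p d i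
      = ∑ i ∈ Finset.Icc 1 m, (1 + p * d * W p d i) := by
    rw [Finset.sum_add_distrib, Finset.mul_sum, Finset.sum_const, Nat.card_Icc]
    simp [hm]
  have h2 : ∑ i ∈ Finset.Icc 1 m, (1 + p * d * W p d i) ≤ ∑ i ∈ Finset.Icc 1 m, W p d (i + d) :=
    Finset.sum_le_sum fun i _ => W_jump p d i hd
  have h3 : ∑ i ∈ Finset.Icc 1 m, W p d (i + d) = ∑ i ∈ Finset.Icc (1 + d) (m + d), W p d i := by
    rw [← Finset.Ico_add_one_right_eq_Icc, ← Finset.Ico_add_one_right_eq_Icc, Finset.sum_Ico_eq_sum_range,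
      Finset.sum_Ico_eq_sum_range]
    have e1 : m + 1 - 1 = m := by omega
    have e2 : m + d + 1 - (1 + d) = m := by omega
    rw [e1, e2]
    exact Finset.sum_congr rfl fun k _ => by ring_nf
  have h4 : ∑ i ∈ Finset.Icc (1 + d) (m + d), W p d i ≤ ∑ i ∈ Finset.Icc 1 n, W p d i := by
    apply Finset.sum_le_sum_of_subset
    apply Finset.Icc_subset_Icc <;> omega
  omega

theorem weight_sum_bound (q d : ℕ) (hq : 2 ≤ q) (hd : 2 ≤ d) (n : ℕ) (hn : 1 ≤ n) :
    ((q - 1) * d - 1) * ∑ i ∈ Finset.Icc 1 n, W (q - 1) d i < d * W (q - 1) d (n + 1) := by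
  set p := q - 1 with hp
  have hp1 : 1 ≤ p := by omega
  set A := ∑ i ∈ Finset.Icc 1 n, W p d i with hA
  set B := ∑ i ∈ Finset.Icc 1 (n - d), W p d i with hB
  set Sg := ∑ j ∈ Finset.range d, W p d (n - j) with hSg
  -- fact1 : Sg + B = A
  have fact1 : Sg + B = A := by
    have := sum_shift p d n d
    rcases le_or_gt d n with h | h
    · have e : n + 1 - d = (n - d) + 1 := by omega
      rw [e, range_Icc, range_Icc] at this
      exact this
    · have e : Finset.Icc 1 (n - d) = ∅ := by
        have : n - d = 0 := by omega
        rw [this]; simp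
      rw [hB, e, Finset.sum_empty]
      have e2 : n + 1 - d = 0 ∨ n + 1 - d = 1 := by omega
      rw [range_Icc] at this
      rcases e2 with e2 | e2 <;> rw [e2] at this <;> simpa [W] using this
  -- fact3 : p * d * B < A + d
  have fact3 : p * d * B < A + d := by
    rcases le_or_gt d n with h | h
    · have := sum_jump p d n (by omega) h
      rw [← hB, ← hA] at this
      omega
    · have e : n - d = 0 := by omega
      rw [hB, e]
      simp
      omega
  -- main computation
  have hW : W p d (n + 1) = 1 + p * Sg := W_succ p d n
  have key : d * W p d (n + 1) = d + p * d * Sg := by rw [hW]; ring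
  have hsub : (p * d - 1) * A + A = p * d * A := by
    have : p * d - 1 + 1 = p * d := by
      have : 1 ≤ p * d := Nat.one_le_iff_ne_zero.mpr (by positivity)
      omega
    calc (p * d - 1) * A + A = (p * d - 1 + 1) * A := by ring
    _ = p * d * A := by rw [this]
  have hdist : p * d * Sg + p * d * B = p * d * A := by rw [← fact1]; ring
  set P1 := p * d * Sg
  set P2 := p * d * B
  set P3 := p * d * A
  set C := (p * d - 1) * A
  set DW := d * W p d (n + 1)
  omega
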